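/- Let P be a reversible stochastic matrix with Perron vector π. For distinct nodes i,j, let Γ_{i,j} be a nonempty set of pairwise edge-disjoint directed paths from i to j in the graph of P, and define the P-length of a path γ = u_1,…,u_{ℓ+1} as |γ|_P = Σ_k (π_{u_k} P_{u_k u_{k+1}})^{-1}, and κ(P) = max_{i≠j} (Σ_{γ∈Γ_{i,j}} |γ|_P^{-1})^{-1}. Then λ_2(P) ≤ 1 − 1/κ(P). -/

import Mathlib

open Finset Matrix

def IsStochastic {n : ℕ} (P : Matrix (Fin n) (Fin n) ℝ) : Prop :=
  (∀ i j, 0 ≤ P i j) ∧ ∀ i, ∑ j, P i j = 1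

def IsIrreducibleM {n : ℕ} (P : Matrix (Fin n) (Fin n) ℝ) : Prop :=
  ∀ i j, ∃ k : ℕ, 0 < (P ^ k) i j

def IsReversible {n : ℕ} (π : Fin n → ℝ) (P : Matrix (Fin n) (Fin n) ℝ) : Prop :=
  ∀ i j, π i * P i j = π j * P j i

/-- A list of vertices `l = u₁, …, u_{ℓ+1}` is a directed path from `i` to `j` in the
graph of `P` if it starts at `i`, ends at `j`, and every consecutive pair is an edge
(positive entry of `P`). -/
def IsPathFrom {n : ℕ} (P : Matrix (Fin n) (Fin n) ℝ) (i j : Fin n)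
    (l : List (Fin n)) : Prop :=
  l.head? = some i ∧ l.getLast? = some j ∧ 2 ≤ l.length ∧
    ∀ e ∈ l.zip l.tail, 0 < P e.1 e.2

/-- The paths in `Γ` are pairwise edge-disjoint. -/
def EdgeDisjointFamily {n : ℕ} (Γ : Finset (List (Fin n))) : Prop :=
  ∀ γ₁ ∈ Γ, ∀ γ₂ ∈ Γ, γ₁ ≠ γ₂ → ∀ e : Fin n × Fin n,
    e ∈ γ₁.zip γ₁.tail → e ∉ γ₂.zip γ₂.tail

/-- The `P`-length of a path: `|γ|_P = ∑_k (π_{u_k} P_{u_k u_{k+1}})⁻¹`. -/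
noncomputable def plen {n : ℕ} (π : Fin n → ℝ) (P : Matrix (Fin n) (Fin n) ℝ)
    (l : List (Fin n)) : ℝ :=
  ((l.zip l.tail).map (fun e => (π e.1 * P e.1 e.2)⁻¹)).sum

/-- The second largest eigenvalue of a reversible stochastic matrix: the supremum of
eigenvalues admitting an eigenvector `π`-orthogonal to the all-ones vector. -/
noncomputable def lambda2 {n : ℕ} (π : Fin n → ℝ) (P : Matrix (Fin n) (Fin n) ℝ) : ℝ :=
  sSup {l : ℝ | ∃ x : Fin n → ℝ, x ≠ 0 ∧ (∑ i, π i * x i) = 0 ∧ P.mulVec x = l • x}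


section Helpers

variable {V : Type*}

/-- Telescoping sum along a list. -/
lemma tele_sum (x : V → ℝ) : ∀ (l : List V) (i j : V), l.head? = some i →
    l.getLast? = some j →
    ((l.zip l.tail).map (fun e => x e.1 - x e.2)).sum = x i - x j
  | [], i, j, hi, hj => by simp at hi
  | [a], i, j, hi, hj => by
      simp only [List.head?_cons, Option.some.injEq] at hi
      simp only [List.getLast?_singleton, Option.some.injEq] at hj
      subst hi; subst hj; simp
  | a :: b :: t, i, j, hi, hj => by
      simp only [List.head?_cons, Option.some.injEq] at hi
      subst hi
      rw [List.getLast?_cons_cons] at hj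
      have ih := tele_sum x (b :: t) b j rfl hj
      simp only [List.tail_cons, List.zip_cons_cons, List.map_cons, List.sum_cons] at ih ⊢
      rw [ih]; ring

/-- Cauchy–Schwarz along a list. -/
lemma list_CS {α : Type*} (q a : α → ℝ) : ∀ (es : List α), (∀ e ∈ es, 0 < q e) →
    ((es.map a).sum)^2 ≤ ((es.map fun e => (q e)⁻¹).sum) *
      ((es.map fun e => q e * (a e)^2).sum)
  | [], _ => by simp
  | e :: es, h => by
      have hq : 0 < q e := h e List.mem_cons_self
      have ih := list_CS q a es (fun e' he' => h e' (List.mem_cons_of_mem e he'))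
      have hT : 0 ≤ (es.map fun e => (q e)⁻¹).sum :=
        List.sum_nonneg (by
          intro y hy
          obtain ⟨e', he', rfl⟩ := List.mem_map.1 hy
          exact inv_nonneg.2 (h e' (List.mem_cons_of_mem e he')).le)
      have hU : 0 ≤ (es.map fun e => q e * (a e)^2).sum :=
        List.sum_nonneg (by
          intro y hy
          obtain ⟨e', he', rfl⟩ := List.mem_map.1 hy
          exact mul_nonneg (h e' (List.mem_cons_of_mem e he')).le (sq_nonneg _))
      simp only [List.map_cons, List.sum_cons]
      set A := (es.map a).sum
      set T := (es.map fun e => (q e)⁻¹).sum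
      set U := (es.map fun e => q e * (a e)^2).sum
      have hr : q e * (q e)⁻¹ = 1 := mul_inv_cancel₀ (ne_of_gt hq)
      have key : 2*(a e)*A ≤ (q e)⁻¹*U + T*(q e)*(a e)^2 := by
        rcases hT.eq_or_lt with h0 | h0
        · have hT0 : T = 0 := h0.symm
          have hA : A = 0 := by nlinarith [ih, sq_nonneg A]
          have h1 : 0 ≤ (q e)⁻¹*U := mul_nonneg (inv_nonneg.2 hq.le) hU
          have h2 : 0 ≤ T*(q e)*(a e)^2 :=
            mul_nonneg (mul_nonneg hT hq.le) (sq_nonneg _)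
          rw [hA]; linarith
        · have h3 : (q e) * (q e)⁻¹ * (T*U) = T*U := by rw [hr]; ring
          have h2 : (2*(a e)*A)*((q e)*T) ≤ ((q e)⁻¹*U + T*(q e)*(a e)^2)*((q e)*T) := by
            nlinarith [sq_nonneg (A - q e * a e * T), ih, h3]
          exact le_of_mul_le_mul_right h2 (mul_pos hq h0)
      have hqr2 : q e * (q e)⁻¹ * (a e)^2 = (a e)^2 := by rw [hr]; ring
      nlinarith [key, ih, hqr2]

/-- Splitting the edge list of a list at an interior vertex. -/
lemma zip_edges_split : ∀ (A : List V) (v : V) (B : List V),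
    (A ++ v :: B).zip (A ++ v :: B).tail
      = ((A ++ [v]).zip (A ++ [v]).tail) ++ ((v :: B).zip B)
  | [], v, B => by simp
  | [a], v, B => by simp
  | a :: c :: A, v, B => by
      have ih := zip_edges_split (c :: A) v B
      simp only [List.cons_append, List.tail_cons, List.zip_cons_cons] at ih ⊢
      rw [ih]

lemma nodup_edges : ∀ {l : List V}, l.Nodup → (l.zip l.tail).Nodup
  | [], _ => by simp
  | [a], _ => by simp
  | a :: b :: t, h => by
      have h1 : a ∉ b :: t := (List.nodup_cons.1 h).1
      have h2 : (b :: t).Nodup := (List.nodup_cons.1 h).2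
      have ih := nodup_edges h2
      simp only [List.tail_cons, List.zip_cons_cons]
      refine List.nodup_cons.2 ⟨?_, ih⟩
      intro hmem
      exact h1 (List.of_mem_zip hmem).1

end Helpers

section PathCS

variable {n : ℕ} (π : Fin n → ℝ) (P : Matrix (Fin n) (Fin n) ℝ) (x : Fin n → ℝ)

/-- Main per-path Poincaré inequality (with loop erasure for repeated vertices). -/
lemma path_CS : ∀ (N : ℕ) (l : List (Fin n)), l.length ≤ N →
    (∀ e ∈ l.zip l.tail, 0 < π e.1 * P e.1 e.2) →
    ∀ i j, l.head? = some i → l.getLast? = some j →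
    (x i - x j)^2 ≤ plen π P l *
      ∑ e ∈ (l.zip l.tail).toFinset, (π e.1 * P e.1 e.2) * (x e.1 - x e.2)^2 := by
  intro N
  induction N with
  | zero =>
      intro l hl _ i j hi _
      interval_cases hlen : l.length
      · simp [List.length_eq_zero_iff.1 hlen] at hi
  | succ N ih =>
      intro l hl hpos i j hi hj
      by_cases hnd : l.Nodup
      · -- nodup case : direct Cauchy–Schwarz
        have hnde := nodup_edges hnd
        have htel := tele_sum x l i j hi hj
        have hcs := list_CS (fun e : Fin n × Fin n => π e.1 * P e.1 e.2)
          (fun e : Fin n × Fin n => x e.1 - x e.2) (l.zip l.tail) hpos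
        rw [htel] at hcs
        have hfs : ∑ e ∈ (l.zip l.tail).toFinset, (π e.1 * P e.1 e.2) * (x e.1 - x e.2)^2
            = ((l.zip l.tail).map fun e => (π e.1 * P e.1 e.2) * (x e.1 - x e.2)^2).sum :=
          List.sum_toFinset _ hnde
        rw [hfs]
        exact hcs
      · -- duplicate case : loop erasure
        obtain ⟨v, hdup⟩ := List.exists_duplicate_iff_not_nodup.2 hnd
        have hsub : List.Sublist [v, v] l := List.duplicate_iff_sublist.1 hdup
        rw [show [v,v] = v :: [v] from rfl, List.cons_sublist_iff] at hsub
        obtain ⟨r₁, r₂, hl12, hv1, hv2⟩ := hsub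
        rw [List.singleton_sublist] at hv2
        obtain ⟨A', B', hr1⟩ := List.append_of_mem hv1
        obtain ⟨C', D', hr2⟩ := List.append_of_mem hv2
        have hldecomp : l = A' ++ v :: ((B' ++ C') ++ v :: D') := by
          rw [hl12, hr1, hr2]; simp
        set l' : List (Fin n) := A' ++ v :: D' with hl'
        -- edge lists
        have hEsub : List.Sublist (l'.zip l'.tail) (l.zip l.tail) := by
          have hmid := zip_edges_split (v :: (B' ++ C')) v D'
          simp only [List.cons_append, List.tail_cons] at hmid
          rw [hldecomp, zip_edges_split A' v ((B' ++ C') ++ v :: D'), hmid,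
            zip_edges_split A' v D']
          exact (List.sublist_append_right _ _).append_left _
        -- lengths
        have hlen : l'.length ≤ N := by
          have h1 : l.length ≤ N + 1 := hl
          rw [hldecomp] at h1
          simp only [hl', List.length_append, List.length_cons] at h1 ⊢
          omega
        -- head and last
        have hhead : l'.head? = some i := by
          cases A' with
          | nil =>
              rw [hldecomp] at hi
              simp only [List.nil_append, List.head?_cons, Option.some.injEq] at hi
              simp [hl', hi]
          | cons a t =>
              rw [hldecomp] at hi
              rw [hl']
              rw [List.head?_append_of_ne_nil _ (by simp)] at hi ⊢
              exact hi
        have hlast : l'.getLast? = some j := by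
          have h1 : l.getLast? = (v :: D').getLast? := by
            rw [hldecomp, show A' ++ v :: (B' ++ C' ++ v :: D')
              = (A' ++ v :: (B' ++ C')) ++ (v :: D') by simp,
              List.getLast?_append_of_ne_nil _ (by simp)]
          have h2 : l'.getLast? = (v :: D').getLast? := by
            rw [hl', show A' ++ v :: D' = A' ++ [v] ++ D' from by simp]
            cases D' with
            | nil => simp
            | cons d t =>
                rw [List.getLast?_append_of_ne_nil _ (by simp)]
                rw [show (v :: d :: t).getLast? = (d :: t).getLast? from
                  List.getLast?_cons_cons]
          rw [h2, ← h1, hj]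
        -- positivity on l'
        have hpos' : ∀ e ∈ l'.zip l'.tail, 0 < π e.1 * P e.1 e.2 :=
          fun e he => hpos e (hEsub.subset he)
        have ihl := ih l' hlen hpos' i j hhead hlast
        refine ihl.trans (mul_le_mul ?_ ?_ ?_ ?_)
        · -- plen l' ≤ plen l
          unfold plen
          refine List.Sublist.sum_le_sum (hEsub.map _) ?_
          intro y hy
          obtain ⟨e, he, rfl⟩ := List.mem_map.1 hy
          exact inv_nonneg.2 (hpos e he).le
        · refine Finset.sum_le_sum_of_subset_of_nonneg ?_ ?_
          · intro e he
            rw [List.mem_toFinset] at he ⊢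
            exact hEsub.subset he
          · intro e he _
            rw [List.mem_toFinset] at he
            exact mul_nonneg (hpos e he).le (sq_nonneg _)
        · refine Finset.sum_nonneg ?_
          intro e he
          rw [List.mem_toFinset] at he
          exact mul_nonneg (hpos' e he).le (sq_nonneg _)
        · unfold plen
          refine List.sum_nonneg ?_
          intro y hy
          obtain ⟨e, he, rfl⟩ := List.mem_map.1 hy
          exact inv_nonneg.2 (hpos e he).le

end PathCS

theorem lambda2_le_kappa_bound {n : ℕ} (hn : 2 ≤ n) (P : Matrix (Fin n) (Fin n) ℝ)
    (π : Fin n → ℝ)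
    (hP : IsStochastic P) (hirr : IsIrreducibleM P)
    (hπpos : ∀ i, 0 < π i) (hπsum : ∑ i, π i = 1)
    (hrev : IsReversible π P)
    (Γ : Fin n → Fin n → Finset (List (Fin n)))
    (hΓne : ∀ i j, i ≠ j → (Γ i j).Nonempty)
    (hΓpath : ∀ i j, i ≠ j → ∀ γ ∈ Γ i j, IsPathFrom P i j γ)
    (hΓdisj : ∀ i j, i ≠ j → EdgeDisjointFamily (Γ i j))
    (κ : ℝ)
    (hκ : κ = sSup {c : ℝ | ∃ i j, i ≠ j ∧
      c = (∑ γ ∈ Γ i j, (plen π P γ)⁻¹)⁻¹}) :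
    lambda2 π P ≤ 1 - 1 / κ := by
  classical
  obtain ⟨hPnn, hProw⟩ := hP
  -- positivity of path lengths
  have hplenpos : ∀ i j, i ≠ j → ∀ γ ∈ Γ i j, 0 < plen π P γ := by
    intro i j hij γ hγ
    obtain ⟨hhd, hlast, hlen, hpos⟩ := hΓpath i j hij γ hγ
    unfold plen
    apply List.sum_pos
    · intro y hy
      obtain ⟨e, he, rfl⟩ := List.mem_map.1 hy
      exact inv_pos.2 (mul_pos (hπpos e.1) (hpos e he))
    · simp only [ne_eq, List.map_eq_nil_iff]
      intro hnil
      have h0 : (γ.zip γ.tail).length = 0 := by rw [hnil]; rfl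
      rw [List.length_zip, List.length_tail] at h0
      omega
  have hsum_pos : ∀ i j, i ≠ j → 0 < ∑ γ ∈ Γ i j, (plen π P γ)⁻¹ := by
    intro i j hij
    obtain ⟨γ₀, hγ₀⟩ := hΓne i j hij
    exact Finset.sum_pos' (fun γ hγ => inv_nonneg.2 (hplenpos i j hij γ hγ).le)
      ⟨γ₀, hγ₀, inv_pos.2 (hplenpos i j hij γ₀ hγ₀)⟩
  have hsum_le : ∀ i j, i ≠ j → ∑ γ ∈ Γ i j, (plen π P γ)⁻¹ ≤ π i := by
    intro i j hij
    have hform : ∀ γ ∈ Γ i j, ∃ v t, γ = i :: v :: t := by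
      intro γ hγ
      obtain ⟨hhd, _, hlen, _⟩ := hΓpath i j hij γ hγ
      match γ, hhd, hlen with
      | a :: b :: t, hhd, _ =>
          refine ⟨b, t, ?_⟩
          simp only [List.head?_cons, Option.some.injEq] at hhd
          rw [hhd]
    set sec : List (Fin n) → Fin n := fun γ => γ.tail.head?.getD i with hsec
    have hsecmem : ∀ γ ∈ Γ i j, ((i, sec γ) ∈ γ.zip γ.tail ∧
        (plen π P γ)⁻¹ ≤ π i * P i (sec γ)) := by
      intro γ hγ
      obtain ⟨v, t, rfl⟩ := hform γ hγ
      have hsv : sec (i :: v :: t) = v := by simp [hsec]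
      have hmem : ((i, v) : Fin n × Fin n) ∈ (i :: v :: t).zip (i :: v :: t).tail := by
        simp [List.zip_cons_cons]
      constructor
      · rw [hsv]; exact hmem
      · rw [hsv]
        have hq : 0 < π i * P i v := by
          obtain ⟨_, _, _, hpos⟩ := hΓpath i j hij _ hγ
          exact mul_pos (hπpos i) (hpos (i, v) hmem)
        have hple : (π i * P i v)⁻¹ ≤ plen π P (i :: v :: t) := by
          unfold plen
          simp only [List.tail_cons, List.zip_cons_cons, List.map_cons, List.sum_cons]
          have hnn : 0 ≤ (((v :: t).zip t).map fun e => (π e.1 * P e.1 e.2)⁻¹).sum := by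
            apply List.sum_nonneg; intro y hy
            obtain ⟨e, he, rfl⟩ := List.mem_map.1 hy
            exact inv_nonneg.2 (mul_nonneg (hπpos e.1).le (hPnn e.1 e.2))
          linarith
        calc (plen π P (i::v::t))⁻¹ ≤ ((π i * P i v)⁻¹)⁻¹ :=
              inv_anti₀ (inv_pos.2 hq) hple
          _ = π i * P i v := inv_inv _
    have hinj : ∀ γ₁ ∈ Γ i j, ∀ γ₂ ∈ Γ i j, sec γ₁ = sec γ₂ → γ₁ = γ₂ := by
      intro γ₁ h₁ γ₂ h₂ hss
      by_contra hne
      have he1 := (hsecmem γ₁ h₁).1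
      have he2 := (hsecmem γ₂ h₂).1
      rw [hss] at he1
      exact hΓdisj i j hij γ₁ h₁ γ₂ h₂ hne _ he1 he2
    calc ∑ γ ∈ Γ i j, (plen π P γ)⁻¹
        ≤ ∑ γ ∈ Γ i j, π i * P i (sec γ) :=
          Finset.sum_le_sum (fun γ hγ => (hsecmem γ hγ).2)
      _ = ∑ v ∈ (Γ i j).image sec, π i * P i v :=
          (Finset.sum_image (f := fun v => π i * P i v) hinj).symm
      _ ≤ ∑ v : Fin n, π i * P i v :=
          Finset.sum_le_sum_of_subset_of_nonneg (Finset.subset_univ _)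
            (fun v _ _ => mul_nonneg (hπpos i).le (hPnn i v))
      _ = π i * ∑ v, P i v := (Finset.mul_sum _ _ _).symm
      _ = π i := by rw [hProw i, mul_one]
  have hπle1 : ∀ i, π i ≤ 1 := by
    intro i
    rw [← hπsum]
    exact Finset.single_le_sum (fun k _ => (hπpos k).le) (Finset.mem_univ i)
  have hmem_ge1 : ∀ (i j : Fin n), i ≠ j → 1 ≤ (∑ γ ∈ Γ i j, (plen π P γ)⁻¹)⁻¹ := by
    intro i j hij
    rw [one_le_inv_iff₀]
    exact ⟨hsum_pos i j hij, (hsum_le i j hij).trans (hπle1 i)⟩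
  have hSfin : {c : ℝ | ∃ i j, i ≠ j ∧ c = (∑ γ ∈ Γ i j, (plen π P γ)⁻¹)⁻¹}.Finite := by
    apply Set.Finite.subset (Set.finite_range
      (fun p : Fin n × Fin n => (∑ γ ∈ Γ p.1 p.2, (plen π P γ)⁻¹)⁻¹))
    rintro c ⟨i, j, hij, rfl⟩; exact ⟨(i, j), rfl⟩
  have hbdd : BddAbove {c : ℝ | ∃ i j, i ≠ j ∧ c = (∑ γ ∈ Γ i j, (plen π P γ)⁻¹)⁻¹} :=
    hSfin.bddAbove
  have hκ1 : 1 ≤ κ := by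
    rw [hκ]
    have hne : (⟨0, by omega⟩ : Fin n) ≠ ⟨1, by omega⟩ := by
      intro h
      exact absurd (congrArg Fin.val h) (by norm_num)
    have hmem : ((∑ γ ∈ Γ ⟨0, by omega⟩ ⟨1, by omega⟩, (plen π P γ)⁻¹)⁻¹ : ℝ) ∈
        {c : ℝ | ∃ i j, i ≠ j ∧ c = (∑ γ ∈ Γ i j, (plen π P γ)⁻¹)⁻¹} :=
      ⟨_, _, hne, rfl⟩
    exact le_trans (hmem_ge1 _ _ hne) (le_csSup hbdd hmem)
  have hκpos : 0 < κ := lt_of_lt_of_le one_pos hκ1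
  have hfij_le : ∀ i j, i ≠ j → (∑ γ ∈ Γ i j, (plen π P γ)⁻¹)⁻¹ ≤ κ := by
    intro i j hij; rw [hκ]; exact le_csSup hbdd ⟨i, j, hij, rfl⟩
  have h0 : (0:ℝ) ≤ 1 - 1/κ := by
    have h1 : 1/κ ≤ 1 := by rw [div_le_one hκpos]; exact hκ1
    linarith
  have hgoal : lambda2 π P = sSup {l : ℝ | ∃ x : Fin n → ℝ, x ≠ 0 ∧
      (∑ i, π i * x i) = 0 ∧ P.mulVec x = l • x} := rfl
  rw [hgoal]
  refine Real.sSup_le ?_ h0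
  rintro lam ⟨x, hx0, horth, heig⟩
  set V : ℝ := ∑ i, π i * x i ^ 2 with hV
  have hVpos : 0 < V := by
    obtain ⟨i, hi⟩ := Function.ne_iff.1 hx0
    refine Finset.sum_pos' (fun k _ => mul_nonneg (hπpos k).le (sq_nonneg _))
      ⟨i, Finset.mem_univ i, mul_pos (hπpos i) ?_⟩
    exact lt_of_le_of_ne (sq_nonneg _) (Ne.symm (pow_ne_zero 2 hi))
  set E2 : ℝ := ∑ i, ∑ j, π i * P i j * (x i - x j)^2 with hE2
  have hE2nn : 0 ≤ E2 := by
    rw [hE2]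
    refine Finset.sum_nonneg fun i _ => Finset.sum_nonneg fun j _ => ?_
    exact mul_nonneg (mul_nonneg (hπpos i).le (hPnn i j)) (sq_nonneg _)
  have hmv : ∀ i, ∑ j, P i j * x j = lam * x i := by
    intro i
    have h1 := congrFun heig i
    simpa [Matrix.mulVec, dotProduct, Pi.smul_apply, smul_eq_mul] using h1
  have hsum1 : ∑ i, ∑ j, π i * P i j * x i ^ 2 = V := by
    rw [hV]; apply Finset.sum_congr rfl; intro i _
    rw [show ∑ j, π i * P i j * x i^2 = π i * x i^2 * ∑ j, P i j from by
      rw [Finset.mul_sum]; exact Finset.sum_congr rfl fun j _ => by ring]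
    rw [hProw i, mul_one]
  have hsum2 : ∑ i, ∑ j, π i * P i j * x j ^ 2 = V := by
    calc ∑ i, ∑ j, π i * P i j * x j^2
        = ∑ i, ∑ j, π j * P j i * x j^2 :=
          Finset.sum_congr rfl fun i _ => Finset.sum_congr rfl fun j _ => by rw [hrev i j]
      _ = ∑ j, ∑ i, π j * P j i * x j^2 := Finset.sum_comm
      _ = V := by
          rw [hV]; apply Finset.sum_congr rfl; intro j _
          rw [show ∑ i, π j * P j i * x j^2 = π j * x j^2 * ∑ i, P j i from by
            rw [Finset.mul_sum]; exact Finset.sum_congr rfl fun i _ => by ring]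
          rw [hProw j, mul_one]
  have hsum3 : ∑ i, ∑ j, π i * P i j * (x i * x j) = lam * V := by
    calc ∑ i, ∑ j, π i * P i j * (x i * x j)
        = ∑ i, π i * x i * ∑ j, P i j * x j :=
          Finset.sum_congr rfl fun i _ => by
            rw [Finset.mul_sum]; exact Finset.sum_congr rfl fun j _ => by ring
      _ = ∑ i, π i * x i * (lam * x i) :=
          Finset.sum_congr rfl fun i _ => by rw [hmv i]
      _ = lam * V := by
          rw [hV, Finset.mul_sum]; exact Finset.sum_congr rfl fun i _ => by ring
  have h2sum : ∑ i, ∑ j, 2*(π i * P i j * (x i * x j))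
      = 2 * ∑ i, ∑ j, π i * P i j * (x i * x j) := by
    rw [Finset.mul_sum]
    exact Finset.sum_congr rfl fun i _ => (Finset.mul_sum _ _ _).symm
  have hC1 : E2 = 2*(1-lam)*V := by
    rw [hE2]
    calc ∑ i, ∑ j, π i * P i j * (x i - x j)^2
        = ∑ i, ((∑ j, π i * P i j * x i^2) - (∑ j, 2*(π i * P i j * (x i * x j)))
            + ∑ j, π i * P i j * x j^2) := by
          apply Finset.sum_congr rfl; intro i _
          rw [← Finset.sum_sub_distrib, ← Finset.sum_add_distrib]
          exact Finset.sum_congr rfl fun j _ => by ring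
      _ = (∑ i, ∑ j, π i * P i j * x i^2) - (∑ i, ∑ j, 2*(π i * P i j * (x i * x j)))
            + ∑ i, ∑ j, π i * P i j * x j^2 := by
          rw [← Finset.sum_sub_distrib, ← Finset.sum_add_distrib]
      _ = V - 2*(lam*V) + V := by rw [hsum1, hsum2, h2sum, hsum3]
      _ = 2*(1-lam)*V := by ring
  have hx2 : ∑ i, ∑ j, π i * π j * (x i - x j)^2 = 2*V := by
    have ht1 : ∑ i, ∑ j, π i * x i^2 * π j = V := by
      rw [hV]; apply Finset.sum_congr rfl; intro i _
      rw [← Finset.mul_sum, hπsum, mul_one]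
    have ht2 : ∑ i, ∑ j, (π i * x i) * (π j * x j) = 0 := by
      calc ∑ i, ∑ j, (π i * x i) * (π j * x j)
          = ∑ i, (π i * x i) * ∑ j, π j * x j :=
            Finset.sum_congr rfl fun i _ => (Finset.mul_sum _ _ _).symm
        _ = 0 := by rw [show (∑ j, π j * x j) = 0 from horth]; simp
    have ht3 : ∑ i, ∑ j, π i * (π j * x j^2) = V := by
      calc ∑ i, ∑ j, π i * (π j * x j^2)
          = ∑ i, π i * ∑ j, π j * x j^2 :=
            Finset.sum_congr rfl fun i _ => (Finset.mul_sum _ _ _).symm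
        _ = (∑ i, π i) * V := by rw [hV, ← Finset.sum_mul]
        _ = V := by rw [hπsum, one_mul]
    have h2sum' : ∑ i, ∑ j, 2*((π i * x i) * (π j * x j))
        = 2 * ∑ i, ∑ j, (π i * x i) * (π j * x j) := by
      rw [Finset.mul_sum]
      exact Finset.sum_congr rfl fun i _ => (Finset.mul_sum _ _ _).symm
    calc ∑ i, ∑ j, π i * π j * (x i - x j)^2
        = ∑ i, ((∑ j, π i * x i^2 * π j) - (∑ j, 2*((π i * x i) * (π j * x j)))
            + ∑ j, π i * (π j * x j^2)) := by
          apply Finset.sum_congr rfl; intro i _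
          rw [← Finset.sum_sub_distrib, ← Finset.sum_add_distrib]
          exact Finset.sum_congr rfl fun j _ => by ring
      _ = (∑ i, ∑ j, π i * x i^2 * π j) - (∑ i, ∑ j, 2*((π i * x i) * (π j * x j)))
            + ∑ i, ∑ j, π i * (π j * x j^2) := by
          rw [← Finset.sum_sub_distrib, ← Finset.sum_add_distrib]
      _ = V - 2*0 + V := by rw [ht1, ht3, h2sum', ht2]
      _ = 2*V := by ring
  have hC4 : ∀ i j, i ≠ j → (x i - x j)^2 ≤ κ * E2 := by
    intro i j hij
    have hs := hsum_pos i j hij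
    have hpathbd : ∀ γ ∈ Γ i j, (plen π P γ)⁻¹ * (x i - x j)^2 ≤
        ∑ e ∈ (γ.zip γ.tail).toFinset, π e.1 * P e.1 e.2 * (x e.1 - x e.2)^2 := by
      intro γ hγ
      obtain ⟨hhd, hlast, hlen, hpos⟩ := hΓpath i j hij γ hγ
      have hposq : ∀ e ∈ γ.zip γ.tail, 0 < π e.1 * P e.1 e.2 :=
        fun e he => mul_pos (hπpos e.1) (hpos e he)
      have hpath := path_CS π P x γ.length γ le_rfl hposq i j hhd hlast
      have hpl := hplenpos i j hij γ hγ
      rw [inv_mul_le_iff₀ hpl]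
      exact hpath
    have hdisjf : (↑(Γ i j) : Set (List (Fin n))).PairwiseDisjoint
        (fun γ => (γ.zip γ.tail).toFinset) := by
      intro γ₁ h₁ γ₂ h₂ hne
      refine Finset.disjoint_left.2 fun e he1 he2 => ?_
      exact hΓdisj i j hij γ₁ h₁ γ₂ h₂ hne e (List.mem_toFinset.1 he1)
        (List.mem_toFinset.1 he2)
    have hsum4 : (∑ γ ∈ Γ i j, (plen π P γ)⁻¹) * (x i - x j)^2 ≤ E2 := by
      rw [Finset.sum_mul]
      calc ∑ γ ∈ Γ i j, (plen π P γ)⁻¹ * (x i - x j)^2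
          ≤ ∑ γ ∈ Γ i j, ∑ e ∈ (γ.zip γ.tail).toFinset,
              π e.1 * P e.1 e.2 * (x e.1 - x e.2)^2 := Finset.sum_le_sum hpathbd
        _ = ∑ e ∈ (Γ i j).biUnion (fun γ => (γ.zip γ.tail).toFinset),
              π e.1 * P e.1 e.2 * (x e.1 - x e.2)^2 := (Finset.sum_biUnion hdisjf).symm
        _ ≤ ∑ e : Fin n × Fin n, π e.1 * P e.1 e.2 * (x e.1 - x e.2)^2 :=
            Finset.sum_le_sum_of_subset_of_nonneg (Finset.subset_univ _)
              (fun e _ _ => mul_nonneg (mul_nonneg (hπpos e.1).le (hPnn e.1 e.2))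
                (sq_nonneg _))
        _ = E2 := by rw [hE2, Fintype.sum_prod_type]
    have hd2 : (x i - x j)^2 ≤ E2 / (∑ γ ∈ Γ i j, (plen π P γ)⁻¹) := by
      rw [le_div_iff₀ hs]
      calc (x i - x j)^2 * (∑ γ ∈ Γ i j, (plen π P γ)⁻¹)
          = (∑ γ ∈ Γ i j, (plen π P γ)⁻¹) * (x i - x j)^2 := by ring
        _ ≤ E2 := hsum4
    refine hd2.trans ?_
    rw [div_eq_mul_inv]
    have h7 : E2 * (∑ γ ∈ Γ i j, (plen π P γ)⁻¹)⁻¹ ≤ E2 * κ :=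
      mul_le_mul_of_nonneg_left (hfij_le i j hij) hE2nn
    linarith [h7]
  have hb : ∀ i j : Fin n, π i * π j * (x i - x j)^2 ≤ π i * π j * (κ * E2) := by
    intro i j
    by_cases hij : i = j
    · subst hij
      have h8 : π i * π i * (x i - x i)^2 = 0 := by ring
      rw [h8]
      exact mul_nonneg (mul_nonneg (hπpos i).le (hπpos i).le)
        (mul_nonneg hκpos.le hE2nn)
    · exact mul_le_mul_of_nonneg_left (hC4 i j hij)
        (mul_nonneg (hπpos i).le (hπpos j).le)
  have hfinal : 2*V ≤ κ * E2 := by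
    calc 2*V = ∑ i, ∑ j, π i * π j * (x i - x j)^2 := hx2.symm
      _ ≤ ∑ i, ∑ j, π i * π j * (κ * E2) :=
          Finset.sum_le_sum fun i _ => Finset.sum_le_sum fun j _ => hb i j
      _ = κ * E2 := by
          have hgen : ∀ c : ℝ, ∑ i, ∑ j, π i * π j * c = c := by
            intro c
            have h1 : ∀ i : Fin n, ∑ j, π i * π j * c = π i * c := by
              intro i
              have h2 : ∑ j, π i * π j * c = π i * c * ∑ j, π j := by
                rw [Finset.mul_sum]
                refine Finset.sum_congr rfl fun j _ => by ring
              rw [h2, hπsum, mul_one]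
            rw [Finset.sum_congr rfl (fun i _ => h1 i), ← Finset.sum_mul, hπsum, one_mul]
          exact hgen (κ * E2)
  rw [hC1] at hfinal
  have h5 : 1 ≤ κ * (1 - lam) := by nlinarith [hVpos, hfinal]
  have h6 : 1/κ ≤ 1 - lam := by
    rw [div_le_iff₀ hκpos]; linarith [h5]
  linarith
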